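/- For n ≥ 1, the set B_{2n+2} of nonempty borders of M_{2n+2} equals {0} ∪ { φ(b)·0 : b ∈ B_{2n+1} }, and the set B_{2n+3} of nonempty borders of M_{2n+3} equals { w : 0·w = φ(b) for some b ∈ B_{2n+2} }, with B_3 = {1, 11}. -/

import Mathlib

/-- The Fibonacci morphism: `false` (=0) ↦ 01, `true` (=1) ↦ 0. -/
def phi (w : List Bool) : List Bool :=
  w.flatMap (fun b => if b then [false] else [false, true])

/-- The Fibonacci words: f₁ = 1, f₂ = 0, f_{n+2} = f_{n+1} f_n. -/
def fw : ℕ → List Bool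
  | 0 => []
  | 1 => [true]
  | 2 => [false]
  | (n+3) => fw (n+2) ++ fw (n+1)

/-- Palindromic prefix: f_n with its last two letters removed. -/
def pw (n : ℕ) : List Bool := (fw n).dropLast.dropLast

/-- Minimal forbidden words of the Fibonacci word:
`M_{2n+1} = 1 p_{2n+1} 1`, `M_{2n+2} = 0 p_{2n+2} 0`. -/
def Mw (n : ℕ) : List Bool :=
  if n % 2 = 0 then false :: (pw n ++ [false]) else true :: (pw n ++ [true])

/-- Correlation bit: `corr u v k` holds iff `C_{u,v}[k] = 1`. -/
def corr {α : Type*} (u v : List α) (k : ℕ) : Prop :=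
  ∀ i j : ℕ, i < u.length → j < v.length → i = j + k → u[i]? = v[j]?

/-- A border of a word is both a prefix and a suffix. -/
def IsBorder {α : Type*} (b w : List α) : Prop := b <+: w ∧ b <:+ w

/-- The set of nonempty borders of `M_n`. -/
def Bset (n : ℕ) : Set (List Bool) := {b | b ≠ [] ∧ IsBorder b (Mw n)}

open scoped Classical in
/-- The correlation polynomial `C_{u,v}(z) = ∑_{k<|u|} C_{u,v}[k] z^{|u|-1-k}`. -/
noncomputable def corrPoly (u v : List Bool) : Polynomial ℤ :=
  ∑ k ∈ Finset.range u.length,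
    if corr u v k then Polynomial.X ^ (u.length - 1 - k) else 0

open scoped Classical in
/-- The nonempty borders of `w`, as a finset. -/
noncomputable def borderFinset (w : List Bool) : Finset (List Bool) :=
  ((Finset.range (w.length + 1)).image (fun k => w.take k)).filter
    (fun b => b ≠ [] ∧ b <:+ w)

section Aux
open List

@[simp] lemma phi_nil : phi [] = [] := rfl
lemma phi_append (a b : List Bool) : phi (a ++ b) = phi a ++ phi b :=
  List.flatMap_append
lemma phi_false (l : List Bool) : phi (false :: l) = false :: true :: phi l := rfl
lemma phi_true (l : List Bool) : phi (true :: l) = false :: phi l := rfl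

lemma phi_eq_nil {l : List Bool} (h : phi l = []) : l = [] := by
  cases l with
  | nil => rfl
  | cons c t => cases c <;> simp [phi_false, phi_true] at h

/-- `phi b ++ [false]` always starts with `false`. -/
lemma phi_concat_head (b : List Bool) : ∃ t, phi b ++ [false] = false :: t := by
  cases b with
  | nil => exact ⟨[], rfl⟩
  | cons c t => cases c <;> simp [phi_false, phi_true]

lemma not_true_prefix_phi (x t : List Bool) (h : true :: t <+: phi x) : False := by
  cases x with
  | nil => simp at h
  | cons c x' =>
    cases c
    · rw [phi_false] at h
      exact absurd (List.cons_prefix_cons.1 h).1 (by simp)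
    · rw [phi_true] at h
      exact absurd (List.cons_prefix_cons.1 h).1 (by simp)

/-- Prefix reflection with boundary marker. -/
lemma phi_prefix_zero : ∀ (b x : List Bool), phi b ++ [false] <+: phi x → b <+: x := by
  intro b
  induction b with
  | nil => intro x _; exact List.nil_prefix
  | cons c b' ih =>
    intro x h
    cases x with
    | nil =>
      exfalso; have := h.length_le
      cases c <;> simp [phi_false, phi_true] at this
    | cons d x' =>
      cases c <;> cases d
      · -- f f
        rw [phi_false, phi_false] at h
        simp only [List.cons_append] at h
        obtain ⟨-, h⟩ := List.cons_prefix_cons.1 h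
        obtain ⟨-, h⟩ := List.cons_prefix_cons.1 h
        exact List.cons_prefix_cons.2 ⟨rfl, ih x' h⟩
      · -- f t
        rw [phi_false, phi_true] at h
        simp only [List.cons_append] at h
        obtain ⟨-, h⟩ := List.cons_prefix_cons.1 h
        exact absurd h (fun hh => not_true_prefix_phi x' _ hh)
      · -- t f
        rw [phi_true, phi_false] at h
        simp only [List.cons_append] at h
        obtain ⟨-, h⟩ := List.cons_prefix_cons.1 h
        obtain ⟨t, ht⟩ := phi_concat_head b'
        rw [ht] at h
        exact absurd (List.cons_prefix_cons.1 h).1 (by simp)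
      · -- t t
        rw [phi_true, phi_true] at h
        simp only [List.cons_append] at h
        obtain ⟨-, h⟩ := List.cons_prefix_cons.1 h
        exact List.cons_prefix_cons.2 ⟨rfl, ih x' h⟩

/-- Prefix reflection in general. -/
lemma phi_prefix : ∀ (b x : List Bool), phi b <+: phi x →
    b <+: x ∨ ∃ b', b = b' ++ [true] ∧ b' ++ [false] <+: x := by
  intro b
  induction b with
  | nil => intro x _; exact Or.inl List.nil_prefix
  | cons c b' ih =>
    intro x h
    cases x with
    | nil =>
      exfalso; have := h.length_le
      cases c <;> simp [phi_false, phi_true] at this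
    | cons d x' =>
      cases c <;> cases d
      · -- f f
        rw [phi_false, phi_false] at h
        obtain ⟨-, h⟩ := List.cons_prefix_cons.1 h
        obtain ⟨-, h⟩ := List.cons_prefix_cons.1 h
        rcases ih x' h with h' | ⟨b'', hb, hp⟩
        · exact Or.inl (List.cons_prefix_cons.2 ⟨rfl, h'⟩)
        · exact Or.inr ⟨false :: b'', by simp [hb], List.cons_prefix_cons.2 ⟨rfl, hp⟩⟩
      · -- f t
        rw [phi_false, phi_true] at h
        obtain ⟨-, h⟩ := List.cons_prefix_cons.1 h
        exact absurd h (fun hh => not_true_prefix_phi x' _ hh)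
      · -- t f
        rw [phi_true, phi_false] at h
        obtain ⟨-, h⟩ := List.cons_prefix_cons.1 h
        cases b' with
        | nil =>
          exact Or.inr ⟨[], rfl, List.cons_prefix_cons.2 ⟨rfl, List.nil_prefix⟩⟩
        | cons e b'' =>
          exfalso
          cases e
          · rw [phi_false] at h
            exact absurd (List.cons_prefix_cons.1 h).1 (by simp)
          · rw [phi_true] at h
            exact absurd (List.cons_prefix_cons.1 h).1 (by simp)
      · -- t t
        rw [phi_true, phi_true] at h
        obtain ⟨-, h⟩ := List.cons_prefix_cons.1 h
        rcases ih x' h with h' | ⟨b'', hb, hp⟩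
        · exact Or.inl (List.cons_prefix_cons.2 ⟨rfl, h'⟩)
        · exact Or.inr ⟨true :: b'', by simp [hb], List.cons_prefix_cons.2 ⟨rfl, hp⟩⟩

/-- Splitting a suffix of an append. -/
lemma suffix_split {α : Type*} : ∀ (a : List α) {b v : List α}, v <:+ a ++ b →
    v <:+ b ∨ ∃ s, s <:+ a ∧ s ≠ [] ∧ v = s ++ b := by
  intro a
  induction a with
  | nil => intro b v h; exact Or.inl (by simpa using h)
  | cons c a' ih =>
    intro b v h
    obtain ⟨t, ht⟩ := h
    cases t with
    | nil =>
      rw [List.nil_append] at ht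
      exact Or.inr ⟨c :: a', List.suffix_rfl, by simp, ht⟩
    | cons c' t' =>
      simp only [List.cons_append, List.cons.injEq] at ht
      rcases ih ⟨t', ht.2⟩ with h' | ⟨s, hs, hne, rfl⟩
      · exact Or.inl h'
      · exact Or.inr ⟨s, hs.trans (List.suffix_cons c a'), hne, rfl⟩

/-- Suffix reflection: a suffix starting with `false` is a clean image. -/
lemma phi_suffix : ∀ (x u : List Bool), u <:+ phi x → u.head? = some false →
    ∃ b, b <:+ x ∧ phi b = u := by
  intro x
  induction x with
  | nil =>
    intro u hu hh
    rw [phi_nil, List.suffix_nil] at hu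
    subst hu; simp at hh
  | cons c x' ih =>
    intro u hu hh
    rw [show phi (c :: x') = (if c then [false] else [false, true]) ++ phi x' from rfl] at hu
    rcases suffix_split _ hu with h' | ⟨s, hs, hne, rfl⟩
    · obtain ⟨b, hb, hb2⟩ := ih u h' hh
      exact ⟨b, hb.trans (List.suffix_cons c x'), hb2⟩
    · cases c
      · -- codeword [false, true]
        simp only [if_neg (by simp : ¬ (false : Bool) = true), Bool.false_eq_true,
          if_false] at hs ⊢
        have : s = [] ∨ s = [true] ∨ s = [false, true] := by
          simp [List.suffix_cons_iff, List.suffix_nil] at hs; tauto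
        rcases this with rfl | rfl | rfl
        · exact absurd rfl hne
        · exfalso; simp at hh
        · exact ⟨false :: x', List.suffix_rfl, rfl⟩
      · -- codeword [false]
        simp only [if_pos rfl] at hs ⊢
        have : s = [] ∨ s = [false] := by
          simp [List.suffix_cons_iff, List.suffix_nil] at hs; tauto
        rcases this with rfl | rfl
        · exact absurd rfl hne
        · exact ⟨true :: x', List.suffix_rfl, rfl⟩

/-- Every `true` in `phi x` is preceded by `false`. -/
lemma phi_true_preceded : ∀ (x v : List Bool), v <:+ phi x → v.head? = some true →
    false :: v <:+ phi x := by
  intro x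
  induction x with
  | nil =>
    intro v hv hh
    rw [phi_nil, List.suffix_nil] at hv
    subst hv; simp at hh
  | cons c x' ih =>
    intro v hv hh
    rw [show phi (c :: x') = (if c then [false] else [false, true]) ++ phi x' from rfl] at hv ⊢
    rcases suffix_split _ hv with h' | ⟨s, hs, hne, rfl⟩
    · exact (ih v h' hh).trans (List.suffix_append _ _)
    · cases c
      · simp only [Bool.false_eq_true, if_false] at hs ⊢
        have : s = [] ∨ s = [true] ∨ s = [false, true] := by
          simp [List.suffix_cons_iff, List.suffix_nil] at hs; tauto
        rcases this with rfl | rfl | rfl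
        · exact absurd rfl hne
        · exact List.suffix_rfl
        · exfalso; simp at hh
      · simp only [if_pos rfl] at hs ⊢
        have : s = [] ∨ s = [false] := by
          simp [List.suffix_cons_iff, List.suffix_nil] at hs; tauto
        rcases this with rfl | rfl
        · exact absurd rfl hne
        · exfalso; simp at hh

end Aux
section Fib
open List

lemma fw_add3 (n : ℕ) : fw (n+3) = fw (n+2) ++ fw (n+1) := rfl

lemma fw_odd_ends : ∀ k, ∃ q, fw (2*k+3) = q ++ [false, true] := by
  intro k
  induction k with
  | zero => exact ⟨[], rfl⟩
  | succ k ih =>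
    obtain ⟨q, hq⟩ := ih
    refine ⟨fw (2*k+4) ++ q, ?_⟩
    have : 2*(k+1)+3 = (2*k+2)+3 := by ring
    rw [this, fw_add3]
    rw [show (2*k+2)+2 = 2*k+4 from by ring, show (2*k+2)+1 = 2*k+3 from by ring, hq,
      List.append_assoc]

lemma fw_even_ends : ∀ k, ∃ q, fw (2*k+4) = q ++ [true, false] := by
  intro k
  induction k with
  | zero => exact ⟨[false], rfl⟩
  | succ k ih =>
    obtain ⟨q, hq⟩ := ih
    refine ⟨fw (2*k+5) ++ q, ?_⟩
    have : 2*(k+1)+4 = (2*k+3)+3 := by ring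
    rw [this, fw_add3]
    rw [show (2*k+3)+2 = 2*k+5 from by ring, show (2*k+3)+1 = 2*k+4 from by ring, hq,
      List.append_assoc]

lemma pw_eq {m : ℕ} {q : List Bool} {a b : Bool} (h : fw m = q ++ [a, b]) : pw m = q := by
  unfold pw
  rw [h, show q ++ [a, b] = (q ++ [a]) ++ [b] from by simp, List.dropLast_concat,
    List.dropLast_concat]

lemma phi_fw_pair : ∀ k, phi (fw (k+1)) = fw (k+2) ∧ phi (fw (k+2)) = fw (k+3) := by
  intro k
  induction k with
  | zero => exact ⟨rfl, rfl⟩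
  | succ k ih =>
    refine ⟨ih.2, ?_⟩
    show phi (fw (k+3)) = fw (k+1+3)
    rw [fw_add3 (k+1), fw_add3 k, phi_append, ih.1, ih.2]
    rfl

lemma phi_fw (k : ℕ) : phi (fw (k+1)) = fw (k+2) := (phi_fw_pair k).1

/-- fw decompositions into pw and the last two letters. -/
lemma fw_odd_pw (k : ℕ) : fw (2*k+3) = pw (2*k+3) ++ [false, true] := by
  obtain ⟨q, hq⟩ := fw_odd_ends k
  rw [pw_eq hq, hq]

lemma fw_even_pw (k : ℕ) : fw (2*k+4) = pw (2*k+4) ++ [true, false] := by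
  obtain ⟨q, hq⟩ := fw_even_ends k
  rw [pw_eq hq, hq]

lemma pw_succ_odd (k : ℕ) : pw (2*k+4) = phi (pw (2*k+3)) ++ [false] := by
  have h1 : phi (fw (2*k+3)) = fw (2*k+4) := by
    have := phi_fw (2*k+2)
    rwa [show 2*k+2+1 = 2*k+3 from rfl, show 2*k+2+2 = 2*k+4 from rfl] at this
  rw [fw_odd_pw k, fw_even_pw k, phi_append] at h1
  have h2 : phi [false, true] = [false] ++ [true, false] := rfl
  rw [h2, ← List.append_assoc] at h1
  exact (List.append_cancel_right h1).symm

lemma pw_succ_even (k : ℕ) : pw (2*k+5) = phi (pw (2*k+4)) ++ [false] := by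
  have h1 : phi (fw (2*k+4)) = fw (2*k+5) := by
    have := phi_fw (2*k+3)
    rwa [show 2*k+3+1 = 2*k+4 from rfl, show 2*k+3+2 = 2*k+5 from rfl] at this
  have h3 : fw (2*k+5) = pw (2*k+5) ++ [false, true] := by
    have := fw_odd_pw (k+1)
    rwa [show 2*(k+1)+3 = 2*k+5 from by ring] at this
  rw [fw_even_pw k, h3, phi_append] at h1
  have h2 : phi [true, false] = [false] ++ [false, true] := rfl
  rw [h2, ← List.append_assoc] at h1
  exact (List.append_cancel_right h1).symm

lemma Mw_odd (k : ℕ) : Mw (2*k+3) = true :: (pw (2*k+3) ++ [true]) := by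
  unfold Mw
  rw [if_neg (by omega)]

lemma Mw_even (k : ℕ) : Mw (2*k+4) = false :: (pw (2*k+4) ++ [false]) := by
  unfold Mw
  rw [if_pos (by omega)]

/-- Key identity I: `M_{2n+2} = φ(M_{2n+1}) ++ [0]`. -/
lemma keyI (k : ℕ) : Mw (2*k+4) = phi (Mw (2*k+3)) ++ [false] := by
  rw [Mw_even, Mw_odd, pw_succ_odd, phi_true, phi_append]
  simp [phi_true]

/-- Key identity II: `0 :: M_{2n+3} = φ(M_{2n+2})`. -/
lemma keyII (k : ℕ) : false :: Mw (2*k+5) = phi (Mw (2*k+4)) := by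
  have hM5 : Mw (2*k+5) = true :: (pw (2*k+5) ++ [true]) := by
    have := Mw_odd (k+1)
    rwa [show 2*(k+1)+3 = 2*k+5 from by ring] at this
  rw [hM5, Mw_even, pw_succ_even, phi_false, phi_append]
  simp [phi_false]

end Fib
section Borders
open List

lemma phi_head_cons (c : Bool) (t : List Bool) : ∃ r, phi (c :: t) = false :: r := by
  cases c
  · exact ⟨true :: phi t, rfl⟩
  · exact ⟨phi t, rfl⟩

lemma Bset3 : Bset 3 = {[true], [true, true]} := by
  have hM : Mw 3 = [true, true] := rfl
  ext x
  simp only [Bset, Set.mem_setOf_eq, hM, IsBorder, Set.mem_insert_iff, Set.mem_singleton_iff]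
  constructor
  · rintro ⟨hne, hp, -⟩
    rcases x with _ | ⟨a, _ | ⟨b, _ | ⟨c, t⟩⟩⟩
    · exact absurd rfl hne
    · obtain ⟨rfl, -⟩ := List.cons_prefix_cons.1 hp
      exact Or.inl rfl
    · exact Or.inr (hp.eq_of_length (by simp))
    · exfalso; have := hp.length_le; simp at this
  · rintro (rfl | rfl)
    · exact ⟨by simp, ⟨[true], rfl⟩, ⟨[true], rfl⟩⟩
    · exact ⟨by simp, List.prefix_rfl, List.suffix_rfl⟩

lemma Bset_even (k : ℕ) :
    Bset (2*k+4) = {[false]} ∪ {w | ∃ b ∈ Bset (2*k+3), w = phi b ++ [false]} := by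
  have hKey := keyI k
  have hModd := Mw_odd k
  have hMeven := Mw_even k
  ext w
  simp only [Bset, Set.mem_setOf_eq, Set.mem_union, Set.mem_singleton_iff, IsBorder]
  constructor
  · rintro ⟨hne, hp, hs⟩
    by_cases hw0 : w = [false]
    · exact Or.inl hw0
    right
    by_cases hwM : w = Mw (2*k+4)
    · refine ⟨Mw (2*k+3), ⟨by rw [hModd]; simp, List.prefix_rfl, List.suffix_rfl⟩, ?_⟩
      rw [hwM, hKey]
    have hs' : w <:+ phi (Mw (2*k+3)) ++ [false] := by rwa [← hKey]
    rcases suffix_split _ hs' with h' | ⟨s, hsuf, hne', rfl⟩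
    · rcases List.suffix_cons_iff.1 h' with rfl | h''
      · exact absurd rfl hw0
      · rw [List.suffix_nil] at h''; exact absurd h'' hne
    · have hshead : s.head? = some false := by
        cases s with
        | nil => exact absurd rfl hne'
        | cons c s' =>
          rw [hMeven] at hp
          simp only [List.cons_append] at hp
          obtain ⟨rfl, -⟩ := List.cons_prefix_cons.1 hp
          rfl
      obtain ⟨b, hbsuf, rfl⟩ := phi_suffix _ _ hsuf hshead
      have hp' : phi b ++ [false] <+: phi (Mw (2*k+3)) ++ [false] := by rwa [← hKey]
      rcases List.prefix_concat_iff.1 hp' with heq | hp''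
      · exact absurd (by rw [heq, ← hKey]) hwM
      · have hbp := phi_prefix_zero _ _ hp''
        refine ⟨b, ⟨?_, hbp, hbsuf⟩, rfl⟩
        intro h; subst h; exact hne' rfl
  · rintro (rfl | ⟨b, ⟨hbne, hbp, hbs⟩, rfl⟩)
    · refine ⟨by simp, ?_, ?_⟩
      · rw [hMeven]; exact ⟨pw (2*k+4) ++ [false], rfl⟩
      · rw [hMeven]; exact ⟨false :: pw (2*k+4), by simp⟩
    · refine ⟨by simp, ?_, ?_⟩
      · obtain ⟨t, ht⟩ := hbp
        rw [hKey, ← ht, phi_append]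
        cases t with
        | nil => simp
        | cons c t' =>
          obtain ⟨r, hr⟩ := phi_head_cons c t'
          rw [hr]
          exact ⟨r ++ [false], by simp⟩
      · obtain ⟨t, ht⟩ := hbs
        rw [hKey, ← ht, phi_append]
        exact ⟨phi t, by simp⟩

lemma Bset_odd (k : ℕ) :
    Bset (2*k+5) = {w | ∃ b ∈ Bset (2*k+4), false :: w = phi b} := by
  have hKey := keyII k
  have hModd : Mw (2*k+5) = true :: (pw (2*k+5) ++ [true]) := by
    have := Mw_odd (k+1); rwa [show 2*(k+1)+3 = 2*k+5 from by ring] at this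
  have hMeven := Mw_even k
  ext w
  simp only [Bset, Set.mem_setOf_eq, IsBorder]
  constructor
  · rintro ⟨hne, hp, hs⟩
    have hwhead : w.head? = some true := by
      cases w with
      | nil => exact absurd rfl hne
      | cons c w' =>
        rw [hModd] at hp
        obtain ⟨rfl, -⟩ := List.cons_prefix_cons.1 hp
        rfl
    have hsuf : w <:+ phi (Mw (2*k+4)) :=
      hs.trans (by rw [← hKey]; exact List.suffix_cons _ _)
    have h2 := phi_true_preceded _ _ hsuf hwhead
    obtain ⟨b, hb, hbw⟩ := phi_suffix _ _ h2 rfl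
    have hpre : phi b <+: phi (Mw (2*k+4)) := by
      rw [hbw, ← hKey]; exact List.cons_prefix_cons.2 ⟨rfl, hp⟩
    rcases phi_prefix _ _ hpre with hbp | ⟨b', rfl, -⟩
    · refine ⟨b, ⟨?_, hbp, hb⟩, hbw.symm⟩
      intro h; rw [h] at hbw; simp at hbw
    · exfalso
      obtain ⟨t, ht⟩ := hb
      rw [hMeven] at ht
      have h1 : ((t ++ b') ++ [true]).getLast? = some true := List.getLast?_concat
      rw [List.append_assoc, ht,
        show false :: (pw (2*k+4) ++ [false]) = (false :: pw (2*k+4)) ++ [false] from by simp,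
        List.getLast?_concat] at h1
      simp at h1
  · rintro ⟨b, ⟨hbne, hbp, hbs⟩, hw⟩
    have hwne : w ≠ [] := by
      intro h; subst h
      cases b with
      | nil => exact hbne rfl
      | cons c b' =>
        rw [hMeven] at hbp
        obtain ⟨rfl, -⟩ := List.cons_prefix_cons.1 hbp
        rw [phi_false] at hw
        simp at hw
    refine ⟨hwne, ?_, ?_⟩
    · obtain ⟨t, ht⟩ := hbp
      have h1 : phi b <+: phi (Mw (2*k+4)) := ⟨phi t, by rw [← phi_append, ht]⟩
      rw [← hKey, ← hw] at h1
      exact (List.cons_prefix_cons.1 h1).2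
    · obtain ⟨t, ht⟩ := hbs
      have h1 : phi b <:+ phi (Mw (2*k+4)) := ⟨phi t, by rw [← phi_append, ht]⟩
      rw [← hKey, ← hw] at h1
      obtain ⟨u, hu⟩ := h1
      cases u with
      | nil =>
        rw [List.nil_append] at hu
        have : w = Mw (2*k+5) := by injection hu
        rw [this]
      | cons c u' =>
        simp only [List.cons_append, List.cons.injEq] at hu
        exact (List.suffix_cons false w).trans ⟨u', hu.2⟩

end Borders

theorem stmt14 (n : ℕ) (hn : 1 ≤ n) :
    Bset 3 = {[true], [true, true]} ∧
    Bset (2*n+2) = {[false]} ∪ {w | ∃ b ∈ Bset (2*n+1), w = phi b ++ [false]} ∧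
    Bset (2*n+3) = {w | ∃ b ∈ Bset (2*n+2), false :: w = phi b} := by
  obtain ⟨k, rfl⟩ : ∃ k, n = k + 1 := ⟨n - 1, by omega⟩
  refine ⟨Bset3, ?_, ?_⟩
  · have := Bset_even k
    rwa [show 2*k+4 = 2*(k+1)+2 from by ring, show 2*k+3 = 2*(k+1)+1 from by ring] at this
  · have := Bset_odd k
    rwa [show 2*k+5 = 2*(k+1)+3 from by ring, show 2*k+4 = 2*(k+1)+2 from by ring] at this
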